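/- arXiv:1805.08673 — 2 statements merged into one kernel-verified Lean document; each statement's English description precedes it below -/
import Mathlib

section
/- Let W be a windmill with tips a_1, a_2, a_3. Then W contains an {a_1,a_2,a_3}-path whose length is congruent to 0 modulo 4. -/
namespace WindmillAux

open SimpleGraph SimpleGraph.Walk

variable {V : Type*} {G : SimpleGraph V}

lemma mem_edges_iff' {x y : V} (p : G.Walk x y) {e : Sym2 V} :
    e ∈ p.edges ↔ ∃ i, i < p.length ∧ e = s(p.getVert i, p.getVert (i + 1)) := by
  induction p with
  | nil => simp
  | @cons u w y h q ih =>
    simp only [edges_cons, List.mem_cons, length_cons, ih]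
    constructor
    · rintro (rfl | ⟨i, hi, rfl⟩)
      · exact ⟨0, by omega, by simp [getVert_zero, getVert_cons]⟩
      · exact ⟨i + 1, by omega, by simp [getVert_cons_succ]⟩
    · rintro ⟨i, hi, rfl⟩
      cases i with
      | zero => left; simp [getVert_zero, getVert_cons]
      | succ i => right; exact ⟨i, by omega, by simp [getVert_cons_succ]⟩

lemma getVert_mem_support' {x y : V} (p : G.Walk x y) {i : ℕ} (hi : i ≤ p.length) :
    p.getVert i ∈ p.support :=
  mem_support_iff_exists_getVert.2 ⟨i, rfl, hi⟩

lemma path_getVert_inj {x y : V} {p : G.Walk x y} (hp : p.IsPath) :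
    ∀ {i j : ℕ}, i ≤ p.length → j ≤ p.length → p.getVert i = p.getVert j → i = j := by
  induction p with
  | nil => intro i j hi hj _; simp at hi hj; omega
  | @cons u w y h q ih =>
    rw [cons_isPath_iff] at hp
    intro i j hi hj hij
    simp only [length_cons] at hi hj
    match i, j with
    | 0, 0 => rfl
    | 0, j + 1 =>
      exfalso
      rw [getVert_zero, getVert_cons_succ] at hij
      exact hp.2 (hij ▸ getVert_mem_support' q (by omega))
    | i + 1, 0 =>
      exfalso
      rw [getVert_zero, getVert_cons_succ] at hij
      exact hp.2 (hij ▸ getVert_mem_support' q (by omega))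
    | i + 1, j + 1 =>
      rw [getVert_cons_succ, getVert_cons_succ] at hij
      have := ih hp.1 (by omega) (by omega) hij
      omega

lemma cycle_getVert_inj {w : V} {c : G.Walk w w} (hc : c.IsCycle) :
    ∀ {i j : ℕ}, i < c.length → j < c.length → c.getVert i = c.getVert j → i = j := by
  match c with
  | .nil => intro i j hi _ _; simp at hi
  | .cons h q =>
    have hq : q.IsPath := by
      apply IsPath.mk'
      have := hc.2
      simpa using this
    intro i j hi hj hij
    simp only [length_cons] at hi hj
    match i, j with
    | 0, 0 => rfl
    | 0, j + 1 =>
      exfalso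
      rw [getVert_zero, getVert_cons_succ] at hij
      have : j = q.length := path_getVert_inj hq (by omega) (le_refl _) (by rw [← hij, getVert_length])
      omega
    | i + 1, 0 =>
      exfalso
      rw [getVert_zero, getVert_cons_succ] at hij
      have : i = q.length := path_getVert_inj hq (by omega) (le_refl _) (by rw [hij, getVert_length])
      omega
    | i + 1, j + 1 =>
      rw [getVert_cons_succ, getVert_cons_succ] at hij
      have := path_getVert_inj hq (by omega) (by omega) hij
      omega

lemma step_seq {A : Type*} [CommRing A] (ψ : ℕ → A) (r : ℕ)
    (hinj : ∀ k ≤ r, ∀ k' ≤ r, ψ k = ψ k' → k = k')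
    (hstep : ∀ k < r, ψ (k + 1) = ψ k + 1 ∨ ψ (k + 1) = ψ k - 1) :
    ∃ δ : A, (δ = 1 ∨ δ = -1) ∧ ∀ k ≤ r, ψ k = ψ 0 + δ * k := by
  rcases Nat.eq_zero_or_pos r with rfl | hr
  · exact ⟨1, Or.inl rfl, by intro k hk; interval_cases k; simp⟩
  refine ⟨ψ 1 - ψ 0, ?_, ?_⟩
  · rcases hstep 0 hr with h | h
    · left; rw [h]; ring
    · right; rw [h]; ring
  have key : ∀ k, k < r → ψ (k + 1) = ψ k + (ψ 1 - ψ 0) := by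
    intro k
    induction k with
    | zero => intro _; ring
    | succ k ihk =>
      intro hk
      have h1 : ψ (k + 1) = ψ k + (ψ 1 - ψ 0) := ihk (by omega)
      have h0 : ψ 1 = ψ 0 + 1 ∨ ψ 1 = ψ 0 - 1 := by simpa using hstep 0 hr
      rcases hstep (k + 1) hk with h2 | h2 <;> rcases h0 with h0 | h0
      · rw [h0]; rw [h0] at h1; linear_combination h2
      · exfalso
        rw [h0] at h1
        have : ψ (k + 2) = ψ k := by rw [h2, h1]; ring
        have := hinj (k + 2) (by omega) k (by omega) this
        omega
      · exfalso
        rw [h0] at h1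
        have : ψ (k + 2) = ψ k := by rw [h2, h1]; ring
        have := hinj (k + 2) (by omega) k (by omega) this
        omega
      · rw [h0]; rw [h0] at h1; linear_combination h2
  intro k
  induction k with
  | zero => intro _; simp
  | succ k ihk =>
    intro hk
    have h1 := key k (by omega)
    have h2 := ihk (by omega)
    rw [h1, h2]
    push_cast
    ring

def buildWalk (G : SimpleGraph V) (f : ℕ → V) : (n : ℕ) → (∀ i < n, G.Adj (f i) (f (i + 1))) → G.Walk (f 0) (f n)
  | 0, _ => Walk.nil
  | n + 1, h => (buildWalk G f n (fun i hi => h i (by omega))).concat (h n (by omega))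

lemma buildWalk_length (G : SimpleGraph V) (f : ℕ → V) (n : ℕ) (h : ∀ i < n, G.Adj (f i) (f (i + 1))) :
    (buildWalk G f n h).length = n := by
  induction n with
  | zero => rfl
  | succ n ih => simp [buildWalk, length_concat, ih]

lemma buildWalk_support (G : SimpleGraph V) (f : ℕ → V) (n : ℕ) (h : ∀ i < n, G.Adj (f i) (f (i + 1))) :
    (buildWalk G f n h).support = (List.range (n + 1)).map f := by
  induction n with
  | zero => simp [buildWalk, List.range_succ]
  | succ n ih =>
    rw [List.range_succ, List.map_append]
    simp [buildWalk, support_concat, ih, List.concat_eq_append]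

lemma buildWalk_edges (G : SimpleGraph V) (f : ℕ → V) (n : ℕ) (h : ∀ i < n, G.Adj (f i) (f (i + 1))) :
    (buildWalk G f n h).edges = (List.range n).map (fun i => s(f i, f (i + 1))) := by
  induction n with
  | zero => simp [buildWalk]
  | succ n ih =>
    rw [List.range_succ, List.map_append]
    simp [buildWalk, edges_concat, ih, List.concat_eq_append]

lemma buildWalk_isPath (G : SimpleGraph V) (f : ℕ → V) (n : ℕ) (h : ∀ i < n, G.Adj (f i) (f (i + 1)))
    (hinj : ∀ k ≤ n, ∀ k' ≤ n, f k = f k' → k = k') : (buildWalk G f n h).IsPath := by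
  apply Walk.IsPath.mk'
  rw [buildWalk_support]
  apply List.Nodup.map_on
  · intro i hi j hj hij
    rw [List.mem_range] at hi hj
    exact hinj i (by omega) j (by omega) hij
  · exact List.nodup_range

lemma cycle_edge_zmod {w : V} (c : G.Walk w w) (hn : 0 < c.length) (z : ZMod c.length) :
    s(c.getVert z.val, c.getVert (z + 1).val) ∈ c.edges := by
  haveI : NeZero c.length := ⟨by omega⟩
  have hv : z.val < c.length := ZMod.val_lt z
  have hmem : s(c.getVert z.val, c.getVert (z.val + 1)) ∈ c.edges :=
    (mem_edges_iff' c).2 ⟨z.val, hv, rfl⟩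
  have hz : ((z.val : ℕ) : ZMod c.length) = z := ZMod.natCast_rightInverse z
  have e1 : ((z.val + 1 : ℕ) : ZMod c.length) = z + 1 := by push_cast [hz]; ring
  by_cases h : z.val + 1 < c.length
  · have : (z + 1).val = z.val + 1 := by
      rw [← e1, ZMod.val_cast_of_lt h]
    rw [this]; exact hmem
  · have h1 : z.val + 1 = c.length := by omega
    have : (z + 1).val = 0 := by
      rw [← e1, h1, ZMod.natCast_self, ZMod.val_zero]
    rw [this]
    have h2 : c.getVert 0 = c.getVert (z.val + 1) := by
      rw [getVert_zero, h1, getVert_length]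
    rw [h2]; exact hmem

lemma cycle_index_succ {w : V} {c : G.Walk w w} (hc : c.IsCycle) {j i : ℕ}
    (hj : j < c.length) (hi : i < c.length) (h : c.getVert j = c.getVert (i + 1)) :
    (j : ZMod c.length) = (i : ZMod c.length) + 1 := by
  by_cases h1 : i + 1 < c.length
  · have := cycle_getVert_inj hc hj h1 h
    subst this; push_cast; ring
  · have h2 : i + 1 = c.length := by omega
    have h3 : c.getVert (i + 1) = c.getVert 0 := by rw [getVert_zero, h2, getVert_length]
    have h4 : j = 0 := cycle_getVert_inj hc hj (by omega) (by rw [h, h3])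
    subst h4
    rw [← Nat.cast_one, ← Nat.cast_add, h2, ZMod.natCast_self, Nat.cast_zero]

lemma support_sub_of_edges_sub {u v x y : V} {R : G.Walk u v} {T : G.Walk x y}
    (hr : 1 ≤ R.length) (h : ∀ e ∈ R.edges, e ∈ T.edges) :
    ∀ z ∈ R.support, z ∈ T.support := by
  intro z hz
  rw [mem_support_iff_exists_getVert] at hz
  obtain ⟨k, rfl, hk⟩ := hz
  by_cases hkr : k < R.length
  · exact T.fst_mem_support_of_mem_edges (h _ ((mem_edges_iff' R).2 ⟨k, hkr, rfl⟩))
  · have hk' : k = R.length := by omega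
    have h1 : R.length - 1 + 1 = k := by omega
    have := h _ ((mem_edges_iff' R).2 ⟨R.length - 1, by omega, rfl⟩)
    rw [h1] at this
    exact T.snd_mem_support_of_mem_edges this

lemma isPath_append_of_inter {a b m : V} {p : G.Walk a m} {q : G.Walk m b}
    (hp : p.IsPath) (hq : q.IsPath) (hint : ∀ z, z ∈ p.support → z ∈ q.support → z = m) :
    (p.append q).IsPath := by
  apply Walk.IsPath.mk'
  rw [support_append, List.nodup_append]
  have hq' := hq.support_nodup
  rw [support_eq_cons q] at hq'
  refine ⟨hp.support_nodup, hq'.of_cons, ?_⟩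
  intro z hzp b hzt hzb
  subst hzb
  have hm : z = m := hint z hzp (List.mem_of_mem_tail hzt)
  subst hm
  exact (List.nodup_cons.1 hq').1 hzt

lemma posP {x y u v : V} {P : G.Walk x y} (hP : P.IsPath) {R : G.Walk u v} (hR : R.IsPath)
    (hr : 1 ≤ R.length) (hRP : ∀ e ∈ R.edges, e ∈ P.edges) :
    ∃ s, s + R.length ≤ P.length ∧
      ((∀ k ≤ R.length, R.getVert k = P.getVert (s + k)) ∨
       (∀ k ≤ R.length, R.getVert k = P.getVert (s + (R.length - k)))) := by
  have hsub : ∀ z ∈ R.support, z ∈ P.support := support_sub_of_edges_sub hr hRP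
  have hex : ∀ k : ℕ, ∃ i, P.getVert i = R.getVert (min k R.length) ∧ i ≤ P.length := by
    intro k
    exact mem_support_iff_exists_getVert.1 (hsub _ (getVert_mem_support' R (min_le_right _ _)))
  choose φ hφ1 hφ2 using hex
  have hstep : ∀ k < R.length, ((φ (k+1) : ℤ)) = φ k + 1 ∨ ((φ (k+1) : ℤ)) = φ k - 1 := by
    intro k hk
    have he : s(R.getVert k, R.getVert (k+1)) ∈ P.edges :=
      hRP _ ((mem_edges_iff' R).2 ⟨k, hk, rfl⟩)
    obtain ⟨i, hi, hie⟩ := (mem_edges_iff' P).1 he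
    have hmin1 : min k R.length = k := by omega
    have hmin2 : min (k+1) R.length = k + 1 := by omega
    have a1 := hφ1 k; rw [hmin1] at a1
    have a2 := hφ1 (k+1); rw [hmin2] at a2
    rcases Sym2.eq_iff.1 hie with ⟨h1, h2⟩ | ⟨h1, h2⟩
    · have e1 : φ k = i := path_getVert_inj hP (hφ2 k) (by omega) (by rw [a1, h1])
      have e2 : φ (k+1) = i + 1 := path_getVert_inj hP (hφ2 (k+1)) (by omega) (by rw [a2, h2])
      left; rw [e1, e2]; push_cast; ring
    · have e1 : φ k = i + 1 := path_getVert_inj hP (hφ2 k) (by omega) (by rw [a1, h1])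
      have e2 : φ (k+1) = i := path_getVert_inj hP (hφ2 (k+1)) (by omega) (by rw [a2, h2])
      right; rw [e1, e2]; push_cast; ring
  have hinj : ∀ k ≤ R.length, ∀ k' ≤ R.length, ((φ k : ℤ)) = φ k' → k = k' := by
    intro k hk k' hk' h
    have hφeq : φ k = φ k' := by exact_mod_cast h
    have a1 := hφ1 k; rw [min_eq_left hk] at a1
    have a2 := hφ1 k'; rw [min_eq_left hk'] at a2
    exact path_getVert_inj hR hk hk' (by rw [← a1, ← a2, hφeq])
  obtain ⟨δ, hδ, hval⟩ := step_seq (fun k => ((φ k : ℤ))) R.length hinj hstep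

  rcases hδ with rfl | rfl
  · refine ⟨φ 0, ?_, Or.inl ?_⟩
    · have h1 := hval R.length le_rfl
      have h2 := hφ2 R.length
      push_cast at h1; omega
    · intro k hk
      have h1 := hval k hk
      have h2 : φ k = φ 0 + k := by push_cast at h1; omega
      have a1 := hφ1 k; rw [min_eq_left hk] at a1
      rw [← a1, h2]
  · have hub : ∀ k ≤ R.length, φ k + k = φ 0 := by
      intro k hk; have := hval k hk; push_cast at this; omega
    refine ⟨φ 0 - R.length, ?_, Or.inr ?_⟩
    · have := hub R.length le_rfl; have := hφ2 0; omega
    · intro k hk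
      have h2 : φ 0 - R.length + (R.length - k) = φ k := by
        have := hub k hk; have := hub R.length le_rfl; omega
      have a1 := hφ1 k; rw [min_eq_left hk] at a1
      rw [← a1, h2]

lemma posC {w u v : V} {C : G.Walk w w} (hC : C.IsCycle) {R : G.Walk u v} (hR : R.IsPath)
    (hr : 1 ≤ R.length) (hRC : ∀ e ∈ R.edges, e ∈ C.edges) :
    ∃ (τ δ : ZMod C.length), (δ = 1 ∨ δ = -1) ∧
      ∀ k ≤ R.length, R.getVert k = C.getVert ((τ + δ * k).val) := by
  have hn3 : 3 ≤ C.length := hC.three_le_length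
  haveI : NeZero C.length := ⟨by omega⟩
  have hsub : ∀ z ∈ R.support, z ∈ C.support := support_sub_of_edges_sub hr hRC
  have hex : ∀ k : ℕ, ∃ i, i < C.length ∧ C.getVert i = R.getVert (min k R.length) := by
    intro k
    obtain ⟨i, hi1, hi2⟩ :=
      mem_support_iff_exists_getVert.1 (hsub _ (getVert_mem_support' R (min_le_right _ _)))
    by_cases h : i < C.length
    · exact ⟨i, h, hi1⟩
    · have hieq : i = C.length := by omega
      exact ⟨0, by omega, by rw [getVert_zero, ← getVert_length C, ← hieq, hi1]⟩
  choose χ hχ1 hχ2 using hex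
  have hstep : ∀ k < R.length, ((χ (k+1) : ZMod C.length)) = χ k + 1 ∨
      ((χ (k+1) : ZMod C.length)) = χ k - 1 := by
    intro k hk
    have he : s(R.getVert k, R.getVert (k+1)) ∈ C.edges :=
      hRC _ ((mem_edges_iff' R).2 ⟨k, hk, rfl⟩)
    obtain ⟨i, hi, hie⟩ := (mem_edges_iff' C).1 he
    have hm1 : min k R.length = k := by omega
    have hm2 : min (k+1) R.length = k+1 := by omega
    have a1 := hχ2 k; rw [hm1] at a1
    have a2 := hχ2 (k+1); rw [hm2] at a2
    rcases Sym2.eq_iff.1 hie with ⟨h1, h2⟩ | ⟨h1, h2⟩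
    · have e1 : χ k = i := cycle_getVert_inj hC (hχ1 k) hi (by rw [a1, h1])
      have e2 : (χ (k+1) : ZMod C.length) = (i : ZMod C.length) + 1 :=
        cycle_index_succ hC (hχ1 (k+1)) hi (by rw [a2, h2])
      left; rw [e2, e1]
    · have e1 : (χ k : ZMod C.length) = (i : ZMod C.length) + 1 :=
        cycle_index_succ hC (hχ1 k) hi (by rw [a1, h1])
      have e2 : χ (k+1) = i := cycle_getVert_inj hC (hχ1 (k+1)) hi (by rw [a2, h2])
      right; rw [e2, e1]; ring
  have hinj : ∀ k ≤ R.length, ∀ k' ≤ R.length, ((χ k : ZMod C.length)) = χ k' → k = k' := by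
    intro k hk k' hk' h
    have hχeq : χ k = χ k' := by
      have h2 := congrArg ZMod.val h
      rwa [ZMod.val_cast_of_lt (hχ1 k), ZMod.val_cast_of_lt (hχ1 k')] at h2
    have a1 := hχ2 k; rw [min_eq_left hk] at a1
    have a2 := hχ2 k'; rw [min_eq_left hk'] at a2
    exact path_getVert_inj hR hk hk' (by rw [← a1, ← a2, hχeq])
  obtain ⟨δ, hδ, hval⟩ := step_seq (fun k => ((χ k : ZMod C.length))) R.length hinj hstep

  refine ⟨(χ 0 : ZMod C.length), δ, hδ, ?_⟩
  intro k hk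
  have a1 := hχ2 k; rw [min_eq_left hk] at a1
  rw [← a1]
  congr 1
  rw [← hval k hk, ZMod.val_cast_of_lt (hχ1 k)]

lemma detour {x y w u v : V} {P : G.Walk x y} {C : G.Walk w w} (hP : P.IsPath) (hC : C.IsCycle)
    {R : G.Walk u v} (hR : R.IsPath) (hr : 1 ≤ R.length)
    (hRP : ∀ e ∈ R.edges, e ∈ P.edges) (hRC : ∀ e ∈ R.edges, e ∈ C.edges)
    (hmix : ∀ z, z ∈ P.support → z ∈ C.support → z ∈ R.support) :
    ∃ Q : G.Walk x y, Q.IsPath ∧ Q.length + 2 * R.length = P.length + C.length ∧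
      (∀ e ∈ Q.edges, e ∈ P.edges ∨ e ∈ C.edges) ∧
      (∀ z ∈ Q.support, z ∈ P.support ∨ z ∈ C.support) := by
  have hn3 : 3 ≤ C.length := hC.three_le_length
  haveI : NeZero C.length := ⟨by omega⟩
  obtain ⟨s, hsr, hor⟩ := posP hP hR hr hRP
  obtain ⟨τ₀, δ₀, hδ₀, hτ₀⟩ := posC hC hR hr hRC
  have hrn : R.length < C.length := by
    by_contra hcon
    push_neg at hcon
    have h2 := hτ₀ C.length hcon
    have h1 := hτ₀ 0 (by omega)
    have e : (τ₀ + δ₀ * (C.length : ZMod C.length)) = τ₀ + δ₀ * ((0 : ℕ) : ZMod C.length) := by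
      rw [ZMod.natCast_self]; push_cast; ring
    rw [e] at h2
    have h3 : R.getVert C.length = R.getVert 0 := by rw [h2, h1]
    have := path_getVert_inj hR hcon (by omega) h3
    omega
  have hcomb : ∃ (τ δ : ZMod C.length), (δ = 1 ∨ δ = -1) ∧
      ∀ k ≤ R.length, P.getVert (s + k) = C.getVert ((τ + δ * k).val) := by
    rcases hor with hA | hB
    · exact ⟨τ₀, δ₀, hδ₀, fun k hk => by rw [← hA k hk, hτ₀ k hk]⟩
    · refine ⟨τ₀ + δ₀ * (R.length : ZMod C.length), -δ₀, ?_, ?_⟩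
      · rcases hδ₀ with rfl | rfl
        · right; rfl
        · left; rw [neg_neg]
      · intro k hk
        have h1 := hB (R.length - k) (by omega)
        have h2 : R.length - (R.length - k) = k := by omega
        rw [h2] at h1
        have h3 := hτ₀ (R.length - k) (by omega)
        rw [← h1, h3]
        congr 2
        push_cast [Nat.cast_sub hk]
        ring
  obtain ⟨τ, δ, hδ, hω⟩ := hcomb
  have hwin : ∀ z, z ∈ P.support → z ∈ C.support → ∃ m ≤ R.length, z = P.getVert (s + m) := by
    intro z h1 h2
    obtain ⟨m, hm1, hm2⟩ := mem_support_iff_exists_getVert.1 (hmix z h1 h2)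
    rcases hor with hA | hB
    · exact ⟨m, hm2, by rw [← hm1, hA m hm2]⟩
    · exact ⟨R.length - m, by omega, by rw [← hm1, hB m hm2]⟩
  have hδδ : δ * δ = 1 := by rcases hδ with rfl | rfl <;> ring
  have hval_lt : ∀ z : ZMod C.length, z.val < C.length := fun z => ZMod.val_lt z
  have hCval_mem : ∀ z : ZMod C.length, C.getVert z.val ∈ C.support :=
    fun z => getVert_mem_support' C (le_of_lt (hval_lt z))
  have hCinj : ∀ z z' : ZMod C.length, C.getVert z.val = C.getVert z'.val → z = z' := by
    intro z z' h
    have h1 := cycle_getVert_inj hC (hval_lt z) (hval_lt z') h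
    have h2 : ((z.val : ℕ) : ZMod C.length) = ((z'.val : ℕ) : ZMod C.length) := by rw [h1]
    rwa [ZMod.natCast_rightInverse z, ZMod.natCast_rightInverse z'] at h2
  set f : ℕ → V := fun k =>
    if k ≤ s then P.getVert k
    else if k ≤ s + (C.length - R.length) then
      C.getVert ((τ - δ * ((k - s : ℕ) : ZMod C.length)).val)
    else P.getVert (k - (C.length - R.length) + R.length) with hf
  set q := s + (C.length - R.length) + (P.length - (s + R.length)) with hq
  have hfA : ∀ k, k ≤ s → f k = P.getVert k := by
    intro k hk; simp only [hf]; rw [if_pos hk]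
  have hfB : ∀ k, s ≤ k → k ≤ s + (C.length - R.length) →
      f k = C.getVert ((τ - δ * ((k - s : ℕ) : ZMod C.length)).val) := by
    intro k h1 h2
    rcases eq_or_lt_of_le h1 with rfl | h1
    · rw [hfA s le_rfl]
      have h0 := hω 0 (by omega)
      simp only [Nat.cast_zero, mul_zero, add_zero, Nat.add_zero] at h0
      rw [h0]
      congr 2
      rw [Nat.sub_self, Nat.cast_zero, mul_zero, sub_zero]
    · simp only [hf]; rw [if_neg (by omega), if_pos h2]
  have hτr : C.getVert ((τ - δ * ((C.length - R.length : ℕ) : ZMod C.length)).val) =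
      P.getVert (s + R.length) := by
    rw [hω R.length le_rfl]
    congr 2
    rw [Nat.cast_sub (le_of_lt hrn), ZMod.natCast_self]
    ring
  have hfC : ∀ k, s + (C.length - R.length) ≤ k →
      f k = P.getVert (k - (C.length - R.length) + R.length) := by
    intro k h1
    rcases eq_or_lt_of_le h1 with rfl | h1
    · rw [hfB _ (by omega) le_rfl]
      have e : s + (C.length - R.length) - s = C.length - R.length := by omega
      rw [e, hτr]
      congr 1
      omega
    · simp only [hf]; rw [if_neg (by omega), if_neg (by omega)]
  have hcross : ∀ k', s < k' → k' ≤ s + (C.length - R.length) → ∀ m, m ≤ P.length →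
      f k' = P.getVert m → k' = s + (C.length - R.length) ∧ m = s + R.length := by
    intro k' h1 h2 m hm heq
    have hfk' := hfB k' (by omega) h2
    have hPm : P.getVert m ∈ P.support := getVert_mem_support' P hm
    have hCm : P.getVert m ∈ C.support := by rw [← heq, hfk']; exact hCval_mem _
    obtain ⟨m', hm', hzm⟩ := hwin _ hPm hCm
    have hCeq : C.getVert ((τ - δ * ((k' - s : ℕ) : ZMod C.length)).val) =
        C.getVert ((τ + δ * (m' : ZMod C.length)).val) := by
      rw [← hfk', heq, hzm, hω m' hm']
    have hz := hCinj _ _ hCeq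
    have h4 : δ * ((k' - s : ℕ) : ZMod C.length) + δ * (m' : ZMod C.length) = 0 := by
      linear_combination -hz
    have h3 : (((k' - s) + m' : ℕ) : ZMod C.length) = 0 := by
      push_cast
      linear_combination δ * h4 - (((k' - s : ℕ) : ZMod C.length) + (m' : ZMod C.length)) * hδδ
    have hdvd : C.length ∣ (k' - s) + m' := (ZMod.natCast_eq_zero_iff _ _).1 h3
    have hsum : (k' - s) + m' = C.length := by
      have hb1 : 0 < (k' - s) + m' := by omega
      have hb2 : (k' - s) + m' ≤ C.length := by omega
      have := Nat.le_of_dvd hb1 hdvd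
      omega
    have hmeq : m = s + m' := path_getVert_inj hP hm (by omega) hzm
    constructor
    · omega
    · omega
  have hinj : ∀ k ≤ q, ∀ k' ≤ q, f k = f k' → k = k' := by
    intro k hk k' hk' heq
    rcases le_or_gt k s with c1 | c1 <;> rcases le_or_gt k' s with c2 | c2
    · rw [hfA k c1, hfA k' c2] at heq
      exact path_getVert_inj hP (by omega) (by omega) heq
    · rcases le_or_gt k' (s + (C.length - R.length)) with c3 | c3
      · have := hcross k' c2 c3 k (by omega) (by rw [← heq, hfA k c1])
        omega
      · rw [hfA k c1, hfC k' (by omega)] at heq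
        have := path_getVert_inj hP (by omega) (by omega) heq
        omega
    · rcases le_or_gt k (s + (C.length - R.length)) with c3 | c3
      · have := hcross k c1 c3 k' (by omega) (by rw [heq, hfA k' c2])
        omega
      · rw [hfA k' c2, hfC k (by omega)] at heq
        have := path_getVert_inj hP (by omega) (by omega) heq
        omega
    · rcases le_or_gt k (s + (C.length - R.length)) with c3 | c3 <;>
        rcases le_or_gt k' (s + (C.length - R.length)) with c4 | c4
      · rw [hfB k (by omega) c3, hfB k' (by omega) c4] at heq
        have hz := hCinj _ _ heq
        have h5 : δ * ((k - s : ℕ) : ZMod C.length) = δ * ((k' - s : ℕ) : ZMod C.length) := by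
          linear_combination -hz
        have h4 : ((k - s : ℕ) : ZMod C.length) = ((k' - s : ℕ) : ZMod C.length) := by
          linear_combination δ * h5 -
            (((k - s : ℕ) : ZMod C.length) - ((k' - s : ℕ) : ZMod C.length)) * hδδ
        have h6 : k - s = k' - s := by
          have h7 := congrArg ZMod.val h4
          rwa [ZMod.val_cast_of_lt (by omega), ZMod.val_cast_of_lt (by omega)] at h7
        omega
      · rw [hfC k' (by omega)] at heq
        have := hcross k c1 c3 _ (by omega) heq
        omega
      · rw [hfC k (by omega)] at heq
        have := hcross k' c2 c4 _ (by omega) heq.symm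
        omega
      · rw [hfC k (by omega), hfC k' (by omega)] at heq
        have := path_getVert_inj hP (by omega) (by omega) heq
        omega
  have hCstep : ∀ K : ℕ, s(C.getVert ((τ - δ * ((K : ℕ) : ZMod C.length)).val),
      C.getVert ((τ - δ * (((K + 1 : ℕ)) : ZMod C.length)).val)) ∈ C.edges := by
    intro K
    rcases hδ with rfl | rfl
    · have h1 := cycle_edge_zmod C (by omega) (τ - ((K + 1 : ℕ) : ZMod C.length))
      have e1 : τ - (1 : ZMod C.length) * (((K + 1 : ℕ)) : ZMod C.length) =
          τ - ((K + 1 : ℕ) : ZMod C.length) := by ring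
      have e2 : τ - (1 : ZMod C.length) * ((K : ℕ) : ZMod C.length) =
          τ - ((K + 1 : ℕ) : ZMod C.length) + 1 := by push_cast; ring
      rw [e1, e2, Sym2.eq_swap]
      exact h1
    · have h1 := cycle_edge_zmod C (by omega) (τ + (K : ZMod C.length))
      have e1 : τ - (-1 : ZMod C.length) * ((K : ℕ) : ZMod C.length) =
          τ + ((K : ℕ) : ZMod C.length) := by ring
      have e2 : τ - (-1 : ZMod C.length) * (((K + 1 : ℕ)) : ZMod C.length) =
          τ + ((K : ℕ) : ZMod C.length) + 1 := by push_cast; ring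
      rw [e1, e2]
      exact h1
  have hstepPC : ∀ k < q, s(f k, f (k + 1)) ∈ P.edges ∨ s(f k, f (k + 1)) ∈ C.edges := by
    intro k hkq
    by_cases c1 : k + 1 ≤ s
    · left
      rw [hfA k (by omega), hfA (k + 1) c1]
      exact (mem_edges_iff' P).2 ⟨k, by omega, rfl⟩
    · by_cases c2 : k + 1 ≤ s + (C.length - R.length)
      · right
        rw [hfB k (by omega) (by omega), hfB (k + 1) (by omega) c2]
        have e3 : k + 1 - s = (k - s) + 1 := by omega
        rw [e3]
        exact hCstep (k - s)
      · left
        rw [hfC k (by omega), hfC (k + 1) (by omega)]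
        have e4 : k + 1 - (C.length - R.length) + R.length =
            (k - (C.length - R.length) + R.length) + 1 := by omega
        rw [e4]
        exact (mem_edges_iff' P).2 ⟨_, by omega, rfl⟩
  have hadj : ∀ k < q, G.Adj (f k) (f (k + 1)) := by
    intro k hk
    rcases hstepPC k hk with h | h
    · exact P.adj_of_mem_edges h
    · exact C.adj_of_mem_edges h
  have hf0 : f 0 = x := by rw [hfA 0 (by omega), getVert_zero]
  have hfq : f q = y := by
    rw [hfC q (by omega)]
    have e : q - (C.length - R.length) + R.length = P.length := by omega
    rw [e, getVert_length]
  refine ⟨(buildWalk G f q hadj).copy hf0 hfq, ?_, ?_, ?_, ?_⟩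
  · rw [isPath_copy]
    exact buildWalk_isPath G f q hadj hinj
  · rw [length_copy, buildWalk_length]
    omega
  · intro e he
    rw [edges_copy, buildWalk_edges] at he
    obtain ⟨i, hi, rfl⟩ := List.mem_map.1 he
    rw [List.mem_range] at hi
    exact hstepPC i hi
  · intro z hz
    rw [support_copy, buildWalk_support] at hz
    obtain ⟨i, hi, rfl⟩ := List.mem_map.1 hz
    rw [List.mem_range] at hi
    by_cases c1 : i ≤ s
    · left; rw [hfA i c1]; exact getVert_mem_support' P (by omega)
    · by_cases c2 : i ≤ s + (C.length - R.length)
      · right; rw [hfB i (by omega) c2]; exact hCval_mem _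
      · left; rw [hfC i (by omega)]; exact getVert_mem_support' P (by omega)

end WindmillAux



open SimpleGraph SimpleGraph.Walk

theorem stmt1 {V : Type*} [DecidableEq V] (G : SimpleGraph V)
    (x : V) (a : Fin 3 → V) (c : Fin 3 → V)
    (P : ∀ i : Fin 3, G.Walk x (a i))
    (C : ∀ i : Fin 3, G.Walk (c i) (c i))
    (hP : ∀ i, (P i).IsPath)
    (hC : ∀ i, (C i).IsCycle)
    (hCodd : ∀ i, Odd (C i).length)
    (hax : ∀ i, a i ≠ x)
    (hPdisj : ∀ i j, i ≠ j → ∀ v, v ∈ (P i).support → v ∈ (P j).support → v = x)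
    (hPC : ∀ i, ∃ (u v : V) (R : G.Walk u v), R.IsPath ∧ 1 ≤ R.length ∧
      (∀ e ∈ R.edges, e ∈ (P i).edges) ∧ (∀ e ∈ R.edges, e ∈ (C i).edges) ∧
      (∀ w, w ∈ (P i).support → w ∈ (C i).support → w ∈ R.support))
    (hCdisj : ∀ i j, i ≠ j → (∀ v ∈ (C i).support, v ∉ (P j).support) ∧
      (∀ v ∈ (C i).support, v ∉ (C j).support)) :
    ∃ (i j : Fin 3), i ≠ j ∧ ∃ p : G.Walk (a i) (a j),
      p.IsPath ∧ p.length % 4 = 0 ∧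
      (∀ e ∈ p.edges, (∃ m, e ∈ (P m).edges) ∨ (∃ m, e ∈ (C m).edges)) ∧
      (∀ v ∈ p.support, (∃ m : Fin 3, v = a m) → v = a i ∨ v = a j) := by

  classical
  have key : ∀ i, ∃ Q : G.Walk x (a i), Q.IsPath ∧ Q.length % 2 = 0 ∧
      (∀ e ∈ Q.edges, e ∈ (P i).edges ∨ e ∈ (C i).edges) ∧
      (∀ z ∈ Q.support, z ∈ (P i).support ∨ z ∈ (C i).support) := by
    intro i
    obtain ⟨u, v, R, hRp, hr, hRP, hRC, hmix⟩ := hPC i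
    by_cases hpar : (P i).length % 2 = 0
    · exact ⟨P i, hP i, hpar, fun e he => Or.inl he, fun z hz => Or.inl hz⟩
    · obtain ⟨Q, h1, h2, h3, h4⟩ := WindmillAux.detour (hP i) (hC i) hRp hr hRP hRC
        (fun z hz1 hz2 => hmix z hz1 hz2)
      refine ⟨Q, h1, ?_, h3, h4⟩
      obtain ⟨m, hm⟩ := hCodd i
      omega
  choose Q hQ1 hQ2 hQ3 hQ4 using key
  have hmod : ∀ i : Fin 3, (Q i).length % 4 = 0 ∨ (Q i).length % 4 = 2 := by
    intro i; have := hQ2 i; omega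
  have hpigeon : ∃ i j : Fin 3, i ≠ j ∧ (Q i).length % 4 = (Q j).length % 4 := by
    rcases hmod 0 with h0 | h0 <;> rcases hmod 1 with h1 | h1 <;> rcases hmod 2 with h2 | h2
    · exact ⟨0, 1, by decide, by omega⟩
    · exact ⟨0, 1, by decide, by omega⟩
    · exact ⟨0, 2, by decide, by omega⟩
    · exact ⟨1, 2, by decide, by omega⟩
    · exact ⟨1, 2, by decide, by omega⟩
    · exact ⟨0, 2, by decide, by omega⟩
    · exact ⟨0, 1, by decide, by omega⟩
    · exact ⟨0, 1, by decide, by omega⟩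
  obtain ⟨i, j, hij, hmodij⟩ := hpigeon
  have hsupij : ∀ z, z ∈ (Q i).support → z ∈ (Q j).support → z = x := by
    intro z hzi hzj
    rcases hQ4 i z hzi with h1 | h1 <;> rcases hQ4 j z hzj with h2 | h2
    · exact hPdisj i j hij z h1 h2
    · exact absurd h1 ((hCdisj j i (Ne.symm hij)).1 z h2)
    · exact absurd h2 ((hCdisj i j hij).1 z h1)
    · exact absurd h2 ((hCdisj i j hij).2 z h1)
  refine ⟨i, j, hij, ((Q i).reverse.append (Q j)), ?_, ?_, ?_, ?_⟩
  · apply WindmillAux.isPath_append_of_inter ((hQ1 i).reverse) (hQ1 j)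
    intro z hz1 hz2
    exact hsupij z (by rwa [support_reverse, List.mem_reverse] at hz1) hz2
  · rw [length_append, length_reverse]
    have := hmod i; have := hmod j
    omega
  · intro e he
    rw [edges_append] at he
    rcases List.mem_append.1 he with h | h
    · rw [edges_reverse, List.mem_reverse] at h
      rcases hQ3 i e h with h' | h'
      · exact Or.inl ⟨i, h'⟩
      · exact Or.inr ⟨i, h'⟩
    · rcases hQ3 j e h with h' | h'
      · exact Or.inl ⟨j, h'⟩
      · exact Or.inr ⟨j, h'⟩
  · intro z hz hzam
    obtain ⟨m, rfl⟩ := hzam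
    rcases (mem_support_append_iff _ _).1 hz with h | h
    · rw [support_reverse, List.mem_reverse] at h
      rcases hQ4 i _ h with h1 | h1
      · by_cases hmi : m = i
        · left; rw [hmi]
        · exact absurd (hPdisj m i (fun hc => hmi hc) (a m) ((P m).end_mem_support) h1) (hax m)
      · by_cases hmi : m = i
        · left; rw [hmi]
        · exact absurd ((P m).end_mem_support)
            ((hCdisj i m (fun hc => hmi hc.symm)).1 (a m) h1)
    · rcases hQ4 j _ h with h1 | h1
      · by_cases hmj : m = j
        · right; rw [hmj]
        · exact absurd (hPdisj m j (fun hc => hmj hc) (a m) ((P m).end_mem_support) h1) (hax m)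
      · by_cases hmj : m = j
        · right; rw [hmj]
        · exact absurd ((P m).end_mem_support)
            ((hCdisj j m (fun hc => hmj hc.symm)).1 (a m) h1)
end

section
/- Let H be a graph with vertex sets A, B, X ⊆ V(H), and let t be a positive integer. If H contains 2t pairwise vertex-disjoint A–X paths and t pairwise vertex-disjoint B–X paths, then H contains 2t pairwise vertex-disjoint paths P_1, …, P_{2t} such that P_i is an A–X path for i ≤ t and a B–X path for t < i ≤ 2t; moreover P_1, …, P_t can be chosen among the original 2t A–X paths, and every P_i is contained in the union of the original 3t paths. -/
structure GPath {V : Type*} (G : SimpleGraph V) where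
  a : V
  b : V
  walk : G.Walk a b
  isPath : walk.IsPath

open SimpleGraph

attribute [local instance] Classical.propDecidable


lemma myIsPathAppend {V : Type*} {G : SimpleGraph V} {u v w : V} {p : G.Walk u v}
    {q : G.Walk v w} (hp : p.IsPath) (hq : q.IsPath)
    (h : ∀ z ∈ p.support, z ∈ q.support → z = v) : (p.append q).IsPath := by
  rw [Walk.isPath_def, Walk.support_append]
  have hq' : (v :: q.support.tail).Nodup := by
    rw [← q.support_eq_cons]; exact hq.support_nodup
  rw [List.nodup_cons] at hq'
  refine List.Nodup.append hp.support_nodup hq'.2 ?_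
  intro z hz1 hz2
  have hz3 : z ∈ q.support := by
    rw [q.support_eq_cons]; exact List.mem_cons_of_mem _ hz2
  have hzv := h z hz1 hz3
  subst hzv
  exact hq'.1 hz2

lemma myExistsTail {V : Type*} {G : SimpleGraph V} (p : V → Prop) {u v : V}
    (w0 : G.Walk u v) : w0.IsPath → (∃ x ∈ w0.support, p x) →
    ∃ y, p y ∧ ∃ T : G.Walk y v, T.IsPath ∧ (∀ e ∈ T.edges, e ∈ w0.edges) ∧
      (∀ z ∈ T.support, z ∈ w0.support) ∧ (∀ z ∈ T.support, p z → z = y) := by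
  induction w0 with
  | nil =>
    intro _ hx
    obtain ⟨x, hx, hpx⟩ := hx
    rw [Walk.support_nil, List.mem_singleton] at hx
    subst hx
    exact ⟨x, hpx, Walk.nil, Walk.IsPath.nil, by simp, fun z hz => hz,
      fun z hz _ => by rwa [Walk.support_nil, List.mem_singleton] at hz⟩
  | cons ha w' ih =>
    intro hp hx
    by_cases hw : ∃ x ∈ w'.support, p x
    · obtain ⟨y, hpy, T, h1, h2, h3, h4⟩ := ih hp.of_cons hw
      refine ⟨y, hpy, T, h1, fun e he => ?_, fun z hz => ?_, h4⟩
      · rw [Walk.edges_cons]; exact List.mem_cons_of_mem _ (h2 e he)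
      · rw [Walk.support_cons]; exact List.mem_cons_of_mem _ (h3 z hz)
    · obtain ⟨x, hx, hpx⟩ := hx
      rw [Walk.support_cons] at hx
      rcases List.mem_cons.mp hx with h' | h'
      · subst h'
        refine ⟨x, hpx, Walk.cons ha w', hp, fun e he => he, fun z hz => hz,
          fun z hz hpz => ?_⟩
        rw [Walk.support_cons] at hz
        rcases List.mem_cons.mp hz with h'' | h''
        · exact h''
        · exact absurd ⟨z, h'', hpz⟩ hw
      · exact absurd ⟨x, h', hpx⟩ hw

lemma myEndMem {V : Type*} {H : SimpleGraph V} {n : ℕ} (Q : Fin n → GPath H)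
    (hQdisj : ∀ i j, i ≠ j → ∀ v, v ∈ (Q i).walk.support → v ∉ (Q j).walk.support)
    {u v : V} (w0 : H.Walk u v) :
    (∀ e ∈ w0.edges, ∃ m, e ∈ (Q m).walk.edges) → ∀ j : Fin n,
    u ∈ (Q j).walk.support → v ∈ (Q j).walk.support := by
  induction w0 with
  | nil => exact fun _ _ h => h
  | cons ha w' ih =>
    intro he j hu
    obtain ⟨m, hm⟩ := he _ (by rw [Walk.edges_cons]; exact List.mem_cons_self)
    have h1 := (Q m).walk.fst_mem_support_of_mem_edges hm
    have h2 := (Q m).walk.snd_mem_support_of_mem_edges hm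
    have hmj : m = j := by
      by_contra hne
      exact hQdisj m j hne _ h1 hu
    rw [hmj] at h2
    exact ih (fun e he' => he _ (by rw [Walk.edges_cons]; exact List.mem_cons_of_mem _ he')) j h2

noncomputable def gcnt {V : Type*} {H : SimpleGraph V} {n : ℕ} (Q : Fin n → GPath H)
    {x y : V} (w : H.Walk x y) : ℕ :=
  w.edges.countP fun e => @decide (¬ ∃ m, e ∈ (Q m).walk.edges) (Classical.propDecidable _)

lemma gcnt_append {V : Type*} {H : SimpleGraph V} {n : ℕ} (Q : Fin n → GPath H)
    {x y z : V} (p : H.Walk x y) (q : H.Walk y z) :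
    gcnt Q (p.append q) = gcnt Q p + gcnt Q q := by
  simp [gcnt, Walk.edges_append]

lemma gcnt_eq_zero {V : Type*} {H : SimpleGraph V} {n : ℕ} (Q : Fin n → GPath H)
    {x y : V} (w : H.Walk x y) :
    gcnt Q w = 0 ↔ ∀ e ∈ w.edges, ∃ m, e ∈ (Q m).walk.edges := by
  simp [gcnt]

def famS {V : Type*} (H : SimpleGraph V) (B X : Set V) {n m k : ℕ}
    (Q : Fin n → GPath H) (R : Fin m → GPath H) (S : Fin k → GPath H) : Prop :=
  (∀ i, (S i).a ∈ B) ∧ (∀ i, (S i).b ∈ X) ∧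
    (∀ i j, i ≠ j → ∀ v, v ∈ (S i).walk.support → v ∉ (S j).walk.support) ∧
    (∀ i, ∀ e ∈ (S i).walk.edges,
      (∃ j, e ∈ (Q j).walk.edges) ∨ (∃ j, e ∈ (R j).walk.edges))

noncomputable def gF {V : Type*} {H : SimpleGraph V} {n k : ℕ} (Q : Fin n → GPath H)
    (S : Fin k → GPath H) : ℕ := ∑ i, gcnt Q (S i).walk

theorem stmt5 {V : Type*} (H : SimpleGraph V) (A B X : Set V) (t : ℕ) (ht : 0 < t)
    (Q : Fin (2 * t) → GPath H) (R : Fin t → GPath H)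
    (hQ : ∀ i, (Q i).a ∈ A ∧ (Q i).b ∈ X)
    (hR : ∀ i, (R i).a ∈ B ∧ (R i).b ∈ X)
    (hQdisj : ∀ i j, i ≠ j → ∀ v, v ∈ (Q i).walk.support → v ∉ (Q j).walk.support)
    (hRdisj : ∀ i j, i ≠ j → ∀ v, v ∈ (R i).walk.support → v ∉ (R j).walk.support) :
    ∃ P : Fin (2 * t) → GPath H,
      (∀ i j, i ≠ j → ∀ v, v ∈ (P i).walk.support → v ∉ (P j).walk.support) ∧
      (∀ i : Fin (2 * t), (i : ℕ) < t → (P i).a ∈ A ∧ (P i).b ∈ X ∧ ∃ j, P i = Q j) ∧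
      (∀ i : Fin (2 * t), t ≤ (i : ℕ) → (P i).a ∈ B ∧ (P i).b ∈ X) ∧
      (∀ i, ∀ e ∈ (P i).walk.edges,
        (∃ j, e ∈ (Q j).walk.edges) ∨ (∃ j, e ∈ (R j).walk.edges)) := by
  classical
  -- choose a family minimizing the number of edges outside ⋃ Q
  obtain ⟨S, hSfam, hSmin⟩ :
      ∃ S, famS H B X Q R S ∧ ∀ S', famS H B X Q R S' → gF Q S ≤ gF Q S' := by
    have hRfam : famS H B X Q R R := ⟨fun i => (hR i).1, fun i => (hR i).2, hRdisj,
      fun i e he => Or.inr ⟨i, he⟩⟩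
    have hne : {n | ∃ S, famS H B X Q R S ∧ gF Q S = n}.Nonempty := ⟨gF Q R, R, hRfam, rfl⟩
    obtain ⟨S, hS, hfS⟩ := Nat.sInf_mem hne
    exact ⟨S, hS, fun S' h => by rw [hfS]; exact Nat.sInf_le ⟨S', h, rfl⟩⟩
  obtain ⟨hSB, hSX, hSdisj, hSE⟩ := hSfam
  -- key claim: every Q j touched by the family contains the X-endpoint of a family member
  have key : ∀ j : Fin (2 * t),
      (∃ x ∈ (Q j).walk.support, ∃ i, x ∈ (S i).walk.support) →
      ∃ i, (S i).b ∈ (Q j).walk.support := by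
    intro j htouch
    by_contra hno
    push_neg at hno
    obtain ⟨y, hpy, T, hTpath, hTe, hTs, hTonly⟩ :=
      myExistsTail (fun z => ∃ i, z ∈ (S i).walk.support) (Q j).walk (Q j).isPath htouch
    obtain ⟨i, hyS⟩ := hpy
    have hyQ : y ∈ (Q j).walk.support := hTs y T.start_mem_support
    have hjunc : ∀ z ∈ ((S i).walk.takeUntil y hyS).support, z ∈ T.support → z = y :=
      fun z hz1 hz2 => hTonly z hz2 ⟨i, (S i).walk.support_takeUntil_subset hyS hz1⟩
    have hPpath : (((S i).walk.takeUntil y hyS).append T).IsPath :=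
      myIsPathAppend ((S i).isPath.takeUntil hyS) hTpath hjunc
    have hnew_supp : ∀ k, k ≠ i → ∀ z,
        z ∈ (((S i).walk.takeUntil y hyS).append T).support → z ∉ (S k).walk.support := by
      intro k hk z hz hzk
      rcases (Walk.mem_support_append_iff _ _).mp hz with h' | h'
      · exact hSdisj i k (Ne.symm hk) z ((S i).walk.support_takeUntil_subset hyS h') hzk
      · have hzy := hTonly z h' ⟨k, hzk⟩
        rw [hzy] at hzk
        exact hSdisj i k (Ne.symm hk) y hyS hzk
    set S' : Fin t → GPath H := Function.update S i
      ⟨(S i).a, (Q j).b, ((S i).walk.takeUntil y hyS).append T, hPpath⟩ with hS'def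
    have hS'i : S' i = ⟨(S i).a, (Q j).b, ((S i).walk.takeUntil y hyS).append T, hPpath⟩ := by
      rw [hS'def]; exact Function.update_self _ _ _
    have hS'ne : ∀ k, k ≠ i → S' k = S k := by
      intro k hk; rw [hS'def]; exact Function.update_of_ne hk _ _
    have hS'fam : famS H B X Q R S' := by
      refine ⟨?_, ?_, ?_, ?_⟩
      · intro k
        by_cases hk : k = i
        · subst hk; rw [hS'i]; exact hSB k
        · rw [hS'ne k hk]; exact hSB k
      · intro k
        by_cases hk : k = i
        · subst hk; rw [hS'i]; exact (hQ j).2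
        · rw [hS'ne k hk]; exact hSX k
      · intro k l hkl v hv1 hv2
        by_cases hk : k = i <;> by_cases hl : l = i
        · exact absurd (hk.trans hl.symm) hkl
        · subst hk
          rw [hS'i] at hv1; rw [hS'ne l hl] at hv2
          exact hnew_supp l hl v hv1 hv2
        · subst hl
          rw [hS'i] at hv2; rw [hS'ne k hk] at hv1
          exact hnew_supp k hk v hv2 hv1
        · rw [hS'ne k hk] at hv1; rw [hS'ne l hl] at hv2
          exact hSdisj k l hkl v hv1 hv2
      · intro k e he
        by_cases hk : k = i
        · subst hk
          rw [hS'i] at he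
          have he' : e ∈ (((S k).walk.takeUntil y hyS).append T).edges := he
          rw [Walk.edges_append] at he'
          rcases List.mem_append.mp he' with h' | h'
          · exact hSE k e ((S k).walk.edges_takeUntil_subset hyS h')
          · exact Or.inl ⟨j, hTe e h'⟩
        · rw [hS'ne k hk] at he; exact hSE k e he
    have hle := hSmin S' hS'fam
    have hfS : gF Q S = gcnt Q (S i).walk + ∑ k ∈ Finset.univ.erase i, gcnt Q (S k).walk :=
      (Finset.add_sum_erase _ _ (Finset.mem_univ i)).symm
    have hfS' : gF Q S' = gcnt Q (((S i).walk.takeUntil y hyS).append T)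
        + ∑ k ∈ Finset.univ.erase i, gcnt Q (S k).walk := by
      rw [show gF Q S' = ∑ k, gcnt Q (S' k).walk from rfl,
        ← Finset.add_sum_erase _ (fun k => gcnt Q (S' k).walk) (Finset.mem_univ i)]
      congr 1
      · rw [hS'i]
      · exact Finset.sum_congr rfl fun k hk => by rw [hS'ne k (Finset.ne_of_mem_erase hk)]
    have hsplit : gcnt Q (S i).walk = gcnt Q ((S i).walk.takeUntil y hyS)
        + gcnt Q ((S i).walk.dropUntil y hyS) := by
      conv_lhs => rw [← Walk.take_spec (S i).walk hyS]
      exact gcnt_append Q _ _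
    have hPT : gcnt Q (((S i).walk.takeUntil y hyS).append T)
        = gcnt Q ((S i).walk.takeUntil y hyS) + gcnt Q T := gcnt_append Q _ _
    have hT0 : gcnt Q T = 0 := (gcnt_eq_zero Q T).mpr fun e he => ⟨j, hTe e he⟩
    have hdz : gcnt Q ((S i).walk.dropUntil y hyS) = 0 := by omega
    have hdropQ := (gcnt_eq_zero Q _).mp hdz
    exact hno i (myEndMem Q hQdisj ((S i).walk.dropUntil y hyS) hdropQ j hyQ)
  -- at most t of the Q's are touched
  have hTDcard : (Finset.univ.filter
      (fun j : Fin (2 * t) => ∃ x ∈ (Q j).walk.support, ∃ i, x ∈ (S i).walk.support)).card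
      ≤ t := by
    have hle : (Finset.univ.filter
        (fun j : Fin (2 * t) => ∃ x ∈ (Q j).walk.support, ∃ i, x ∈ (S i).walk.support)).card
        ≤ (Finset.univ : Finset (Fin t)).card := by
      apply Finset.card_le_card_of_injOn
        (fun j => if h : ∃ x ∈ (Q j).walk.support, ∃ i, x ∈ (S i).walk.support
          then Classical.choose (key j h) else ⟨0, ht⟩)
      · intro j _; exact Finset.mem_univ _
      · intro j1 hj1 j2 hj2 heq
        rw [Finset.mem_coe, Finset.mem_filter] at hj1 hj2
        simp only [dif_pos hj1.2, dif_pos hj2.2] at heq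
        have e1 := Classical.choose_spec (key j1 hj1.2)
        have e2 := Classical.choose_spec (key j2 hj2.2)
        rw [heq] at e1
        by_contra hne
        exact hQdisj j1 j2 hne _ e1 e2
    simpa using hle
  have hsplitcard : (Finset.univ.filter
      (fun j : Fin (2 * t) => ∃ x ∈ (Q j).walk.support, ∃ i, x ∈ (S i).walk.support)).card
      + (Finset.univ.filter
      (fun j : Fin (2 * t) => ¬ ∃ x ∈ (Q j).walk.support, ∃ i, x ∈ (S i).walk.support)).card
      = 2 * t := by
    rw [Finset.card_filter_add_card_filter_not]
    simp
  set UT : Finset (Fin (2 * t)) := Finset.univ.filter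
    (fun j : Fin (2 * t) => ¬ ∃ x ∈ (Q j).walk.support, ∃ i, x ∈ (S i).walk.support)
    with hUTdef
  have hUTcard : t ≤ UT.card := by omega
  set emb := UT.orderEmbOfCardLe hUTcard with hembdef
  have hunt : ∀ k : Fin t,
      ¬ ∃ x ∈ (Q (emb k)).walk.support, ∃ i, x ∈ (S i).walk.support := by
    intro k
    have h1 : emb k ∈ Finset.univ.filter
        (fun j : Fin (2 * t) => ¬ ∃ x ∈ (Q j).walk.support, ∃ i, x ∈ (S i).walk.support) :=
      Finset.orderEmbOfCardLe_mem UT hUTcard k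
    exact (Finset.mem_filter.mp h1).2
  set P : Fin (2 * t) → GPath H := fun i =>
    if h : (i : ℕ) < t then Q (emb ⟨(i : ℕ), h⟩)
    else S ⟨(i : ℕ) - t, by have := i.isLt; omega⟩ with hPdef
  have hPlt : ∀ (i : Fin (2 * t)) (hi : (i : ℕ) < t), P i = Q (emb ⟨(i : ℕ), hi⟩) := by
    intro i hi; rw [hPdef]; exact dif_pos hi
  have hPge : ∀ (i : Fin (2 * t)) (hi : ¬ (i : ℕ) < t),
      P i = S ⟨(i : ℕ) - t, by have := i.isLt; omega⟩ := by
    intro i hi; rw [hPdef]; exact dif_neg hi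
  refine ⟨P, ?_, ?_, ?_, ?_⟩
  · intro i j hij v hvi hvj
    by_cases hi : (i : ℕ) < t <;> by_cases hj : (j : ℕ) < t
    · rw [hPlt i hi] at hvi; rw [hPlt j hj] at hvj
      have hne : emb ⟨(i : ℕ), hi⟩ ≠ emb ⟨(j : ℕ), hj⟩ := by
        intro heq
        have h2 := emb.injective heq
        injection h2 with h3
        exact hij (Fin.val_injective h3)
      exact hQdisj _ _ hne v hvi hvj
    · rw [hPlt i hi] at hvi; rw [hPge j hj] at hvj
      exact (hunt ⟨(i : ℕ), hi⟩) ⟨v, hvi, _, hvj⟩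
    · rw [hPge i hi] at hvi; rw [hPlt j hj] at hvj
      exact (hunt ⟨(j : ℕ), hj⟩) ⟨v, hvj, _, hvi⟩
    · rw [hPge i hi] at hvi; rw [hPge j hj] at hvj
      refine hSdisj _ _ ?_ v hvi hvj
      intro heq
      have h2 : (i : ℕ) - t = (j : ℕ) - t := congrArg Fin.val heq
      have hi' := i.isLt
      have hj' := j.isLt
      exact hij (Fin.val_injective (by omega))
  · intro i hi
    rw [hPlt i hi]
    exact ⟨(hQ _).1, (hQ _).2, _, rfl⟩
  · intro i hi
    rw [hPge i (not_lt.mpr hi)]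
    exact ⟨hSB _, hSX _⟩
  · intro i e he
    by_cases hi : (i : ℕ) < t
    · rw [hPlt i hi] at he
      exact Or.inl ⟨_, he⟩
    · rw [hPge i hi] at he
      exact hSE _ e he
end
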